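/- Let f : ℝⁿ → ℝ be μ-strongly convex with L-Lipschitz gradient and minimizer x*. Consider the perturbed gradient iteration x^{k+1} = x^k − γ(∇f(x^k) + e^k) where ‖e^k‖ ≤ ε for all k. If 0 < γ ≤ 2/(μ+L), then for all k, ‖x^k − x*‖ ≤ ρ^k ‖x^0 − x*‖ + γ ε (1 − ρ^k)/(1 − ρ), where ρ = √(1 − 2γμL/(μ+L)) < 1. In particular limsup_k ‖x^k − x*‖ ≤ γ ε/(1 − ρ). -/

import Mathlib

open Filter InnerProductSpace

section AuxDelta

variable {E : Type*} [NormedAddCommGroup E] [InnerProductSpace ℝ E]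

local notation "⟪" x ", " y "⟫" => @inner ℝ _ _ x y

lemma aux_hasDerivAt_line [CompleteSpace E] (f : E → ℝ) (f' : E → E)
    (hgrad : ∀ x, HasGradientAt f (f' x) x) (x v : E) (t : ℝ) :
    HasDerivAt (fun s : ℝ => f (x + s • v)) ⟪f' (x + t • v), v⟫ t := by
  have hc : HasDerivAt (fun s : ℝ => x + s • v) v t := by
    simpa using ((hasDerivAt_id t).smul_const v).const_add x
  have hf := (hgrad (x + t • v)).hasFDerivAt
  have := hf.comp_hasDerivAt t hc
  simp at this
  exact this

/-- First-order lower bound for strongly convex functions. -/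
lemma aux_lower [CompleteSpace E] (f : E → ℝ) (f' : E → E) (μ : ℝ)
    (hgrad : ∀ x, HasGradientAt f (f' x) x)
    (hsc : StrongConvexOn Set.univ μ f) :
    ∀ x y : E, f x + ⟪f' x, y - x⟫ + μ / 2 * ‖y - x‖ ^ 2 ≤ f y := by
  intro x y
  set v := y - x with hv
  have hder := aux_hasDerivAt_line f f' hgrad x v 0
  rw [hasDerivAt_iff_tendsto_slope] at hder
  have hten : Tendsto (slope (fun s : ℝ => f (x + s • v)) 0) (nhdsWithin 0 (Set.Ioi 0))
      (nhds ⟪f' (x + (0:ℝ) • v), v⟫) :=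
    hder.mono_left (nhdsWithin_mono 0 (fun t ht => ne_of_gt ht))
  have hbound : ∀ t ∈ Set.Ioo (0:ℝ) 1,
      slope (fun s : ℝ => f (x + s • v)) 0 t ≤ (f y - f x) - (1 - t) * (μ / 2 * ‖v‖ ^ 2) := by
    intro t ht
    have hcc := hsc.2 (Set.mem_univ y) (Set.mem_univ x)
      (le_of_lt ht.1) (by linarith [ht.2] : (0:ℝ) ≤ 1 - t) (by ring)
    have hpt : t • y + (1 - t) • x = x + t • v := by
      rw [hv]; module
    rw [hpt] at hcc
    rw [slope_def_field]
    have h0 : f (x + (0:ℝ) • v) = f x := by simp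
    rw [h0, sub_zero, div_le_iff₀ ht.1]
    simp only [smul_eq_mul] at hcc
    nlinarith [hcc, sq_nonneg ‖v‖, ht.1, ht.2]
  have hlim2 : Tendsto (fun t : ℝ => (f y - f x) - (1 - t) * (μ / 2 * ‖v‖ ^ 2))
      (nhdsWithin 0 (Set.Ioi 0)) (nhds ((f y - f x) - (1 - 0) * (μ / 2 * ‖v‖ ^ 2))) := by
    apply Tendsto.mono_left _ nhdsWithin_le_nhds
    exact (tendsto_const_nhds.sub (((tendsto_const_nhds.sub tendsto_id).mul tendsto_const_nhds)))
  have hev : slope (fun s : ℝ => f (x + s • v)) 0 ≤ᶠ[nhdsWithin 0 (Set.Ioi 0)]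
      fun t : ℝ => (f y - f x) - (1 - t) * (μ / 2 * ‖v‖ ^ 2) := by
    filter_upwards [Ioo_mem_nhdsGT_of_mem (by norm_num : (0:ℝ) ∈ Set.Ico (0:ℝ) 1)] with t ht
    exact hbound t ht
  have := le_of_tendsto_of_tendsto hten hlim2 hev
  simp only [zero_smul, add_zero] at this
  nlinarith [this]

/-- Descent lemma for functions with Lipschitz gradient. -/
lemma aux_upper [CompleteSpace E] (f : E → ℝ) (f' : E → E) (L : ℝ) (hL : 0 ≤ L)
    (hgrad : ∀ x, HasGradientAt f (f' x) x)
    (hlip : LipschitzWith L.toNNReal f') :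
    ∀ x y : E, f y ≤ f x + ⟪f' x, y - x⟫ + L / 2 * ‖y - x‖ ^ 2 := by
  intro x y
  set v := y - x with hv
  set ψ : ℝ → ℝ := fun t => f (x + t • v) - t * ⟪f' x, v⟫ - L / 2 * ‖v‖ ^ 2 * t ^ 2 with hψ
  have hdψ : ∀ t : ℝ, HasDerivAt ψ (⟪f' (x + t • v), v⟫ - ⟪f' x, v⟫ - L * ‖v‖ ^ 2 * t) t := by
    intro t
    have h1 := aux_hasDerivAt_line f f' hgrad x v t
    have h2 : HasDerivAt (fun t : ℝ => t * ⟪f' x, v⟫) ⟪f' x, v⟫ t := by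
      simpa using (hasDerivAt_id t).mul_const (⟪f' x, v⟫)
    have h3 : HasDerivAt (fun t : ℝ => L / 2 * ‖v‖ ^ 2 * t ^ 2) (L / 2 * ‖v‖ ^ 2 * (2 * t)) t := by
      simpa using ((hasDerivAt_pow 2 t).const_mul (L / 2 * ‖v‖ ^ 2))
    have h4 := (h1.sub h2).sub h3
    exact h4.congr_deriv (by ring)
  have hanti : AntitoneOn ψ (Set.Icc 0 1) := by
    apply antitoneOn_of_deriv_nonpos (convex_Icc 0 1)
    · exact fun t _ => ((hdψ t).continuousAt).continuousWithinAt
    · exact fun t _ => ((hdψ t).differentiableAt).differentiableWithinAt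
    · intro t ht
      rw [interior_Icc] at ht
      rw [(hdψ t).deriv]
      have hlb : ⟪f' (x + t • v) - f' x, v⟫ ≤ L * t * ‖v‖ ^ 2 := by
        calc ⟪f' (x + t • v) - f' x, v⟫ ≤ ‖f' (x + t • v) - f' x‖ * ‖v‖ :=
              real_inner_le_norm _ _
          _ ≤ (L * (t * ‖v‖)) * ‖v‖ := by
              apply mul_le_mul_of_nonneg_right _ (norm_nonneg v)
              have hd := hlip.dist_le_mul (x + t • v) x
              rw [dist_eq_norm, dist_eq_norm] at hd
              simpa [norm_smul, abs_of_pos ht.1, Real.coe_toNNReal L hL] using hd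
          _ = L * t * ‖v‖ ^ 2 := by ring
      rw [inner_sub_left] at hlb
      linarith
  have hfin := hanti (Set.left_mem_Icc.2 zero_le_one) (Set.right_mem_Icc.2 zero_le_one) zero_le_one
  simp only [hψ, zero_smul, add_zero, one_smul, zero_mul, mul_zero, sub_zero, one_pow, mul_one,
    hv, add_sub_cancel] at hfin
  linarith

/-- Cocoercivity from two-sided quadratic bounds. -/
lemma aux_coco (g : E → ℝ) (g' : E → E) (M : ℝ) (hM : 0 ≤ M)
    (hlow : ∀ x y : E, g x + ⟪g' x, y - x⟫ ≤ g y)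
    (hup : ∀ x y : E, g y ≤ g x + ⟪g' x, y - x⟫ + M / 2 * ‖y - x‖ ^ 2) :
    ∀ x y : E, ‖g' x - g' y‖ ^ 2 ≤ M * ⟪g' x - g' y, x - y⟫ := by
  have hkey : ∀ (p q : E) (t : ℝ),
      t * ‖g' p - g' q‖ ^ 2 ≤
        (g q - g p - ⟪g' p, q - p⟫) + M / 2 * t ^ 2 * ‖g' p - g' q‖ ^ 2 := by
    intro p q t
    set d := g' p - g' q with hd
    have h1 := hlow p (q + t • d)
    have h2 := hup q (q + t • d)
    have hz1 : q + t • d - p = (q - p) + t • d := by abel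
    have hz2 : q + t • d - q = t • d := by abel
    rw [hz1, inner_add_right, real_inner_smul_right] at h1
    rw [hz2, real_inner_smul_right] at h2
    have hn : ‖t • d‖ ^ 2 = t ^ 2 * ‖d‖ ^ 2 := by
      rw [norm_smul, mul_pow, Real.norm_eq_abs, sq_abs]
    rw [hn] at h2
    have hdd : ⟪g' p, d⟫ - ⟪g' q, d⟫ = ‖d‖ ^ 2 := by
      rw [← inner_sub_left, ← hd, real_inner_self_eq_norm_sq]
    have hdd2 : t * ⟪g' p, d⟫ - t * ⟪g' q, d⟫ = t * ‖d‖ ^ 2 := by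
      rw [← mul_sub, hdd]
    linarith [h1, h2, hdd2]
  intro x y
  set A := ‖g' x - g' y‖ ^ 2 with hA
  set S := ⟪g' x - g' y, x - y⟫ with hS
  have hsum : (g y - g x - ⟪g' x, y - x⟫) + (g x - g y - ⟪g' y, x - y⟫) = S := by
    rw [hS, inner_sub_left]
    have h1 : ⟪g' x, y - x⟫ = -⟪g' x, x - y⟫ := by
      rw [← inner_neg_right]; congr 1; abel
    linarith [h1]
  rcases eq_or_lt_of_le hM with hM0 | hMpos
  · have h0 : ∀ t : ℝ, t * A ≤ g y - g x - ⟪g' x, y - x⟫ := by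
      intro t
      have := hkey x y t
      rw [← hM0] at this
      simpa using this
    have hle : A ≤ 0 := by
      by_contra h
      push_neg at h
      have := h0 ((g y - g x - ⟪g' x, y - x⟫ + 1) / A)
      rw [div_mul_cancel₀ _ (ne_of_gt h)] at this
      linarith
    rw [← hM0]
    simpa using hle
  · have hMne : M ≠ 0 := ne_of_gt hMpos
    have h1 := hkey x y (1 / M)
    have h2 := hkey y x (1 / M)
    rw [norm_sub_rev (g' y)] at h2
    set Dxy := g y - g x - ⟪g' x, y - x⟫ with hDxy
    set Dyx := g x - g y - ⟪g' y, x - y⟫ with hDyx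
    have hA1 : A ≤ 2 * M * Dxy := by
      have e1 : 2 * M * (1 / M * A) = 2 * A := by field_simp
      have e2 : 2 * M * (Dxy + M / 2 * (1 / M) ^ 2 * A) = 2 * M * Dxy + A := by
        field_simp
      have := mul_le_mul_of_nonneg_left h1 (by linarith : (0:ℝ) ≤ 2 * M)
      rw [e1, e2] at this
      linarith
    have hA2 : A ≤ 2 * M * Dyx := by
      have e1 : 2 * M * (1 / M * A) = 2 * A := by field_simp
      have e2 : 2 * M * (Dyx + M / 2 * (1 / M) ^ 2 * A) = 2 * M * Dyx + A := by
        field_simp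
      have := mul_le_mul_of_nonneg_left h2 (by linarith : (0:ℝ) ≤ 2 * M)
      rw [e1, e2] at this
      linarith
    have : 2 * A ≤ 2 * M * S := by
      calc 2 * A ≤ 2 * M * Dxy + 2 * M * Dyx := by linarith
        _ = 2 * M * (Dxy + Dyx) := by ring
        _ = 2 * M * S := by rw [hsum]
    linarith

end AuxDelta

set_option maxHeartbeats 1600000 in
/-- Perturbed gradient descent with bounded gradient error `‖e^k‖ ≤ ε`
converges linearly to a neighborhood of the minimizer:
`‖x^k - x*‖ ≤ ρ^k ‖x^0 - x*‖ + γε(1-ρ^k)/(1-ρ)` with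
`ρ = √(1 - 2γμL/(μ+L)) < 1`, and `limsup_k ‖x^k - x*‖ ≤ γε/(1-ρ)`. -/
theorem stmt_8 {n : ℕ} (f : EuclideanSpace ℝ (Fin n) → ℝ)
    (f' : EuclideanSpace ℝ (Fin n) → EuclideanSpace ℝ (Fin n))
    (μ L γ ε : ℝ) (hμ : 0 < μ) (hL : 0 < L) (hε : 0 ≤ ε)
    (hgrad : ∀ x, HasGradientAt f (f' x) x)
    (hsc : StrongConvexOn Set.univ μ f)
    (hlip : LipschitzWith L.toNNReal f')
    (xstar : EuclideanSpace ℝ (Fin n))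
    (hmin : ∀ x, f xstar ≤ f x)
    (hγ0 : 0 < γ) (hγ : γ ≤ 2 / (μ + L))
    (x : ℕ → EuclideanSpace ℝ (Fin n))
    (e : ℕ → EuclideanSpace ℝ (Fin n))
    (he : ∀ k, ‖e k‖ ≤ ε)
    (hiter : ∀ k, x (k + 1) = x k - γ • (f' (x k) + e k)) :
    Real.sqrt (1 - 2 * γ * μ * L / (μ + L)) < 1 ∧
    (∀ k, ‖x k - xstar‖ ≤
        Real.sqrt (1 - 2 * γ * μ * L / (μ + L)) ^ k * ‖x 0 - xstar‖ +
          γ * ε * (1 - Real.sqrt (1 - 2 * γ * μ * L / (μ + L)) ^ k) /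
            (1 - Real.sqrt (1 - 2 * γ * μ * L / (μ + L)))) ∧
    limsup (fun k => ‖x k - xstar‖) atTop ≤
      γ * ε / (1 - Real.sqrt (1 - 2 * γ * μ * L / (μ + L))) := by
  set ρ := Real.sqrt (1 - 2 * γ * μ * L / (μ + L)) with hρdef
  have hμL : (0:ℝ) < μ + L := by linarith
  have hγ' : γ * (μ + L) ≤ 2 := by
    rw [le_div_iff₀ hμL] at hγ; exact hγ
  have hkeysc : 2 * γ * μ * L ≤ μ + L := by
    nlinarith [sq_nonneg (μ - L), mul_pos hμ hL,
      mul_le_mul_of_nonneg_left hγ' (by positivity : (0:ℝ) ≤ 2 * μ * L)]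
  have harg : 0 ≤ 1 - 2 * γ * μ * L / (μ + L) := by
    rw [sub_nonneg, div_le_one hμL]; exact hkeysc
  have hρ0 : 0 ≤ ρ := Real.sqrt_nonneg _
  have hρsq : ρ ^ 2 = 1 - 2 * γ * μ * L / (μ + L) := Real.sq_sqrt harg
  have hρlt : ρ < 1 := by
    have hlt : 1 - 2 * γ * μ * L / (μ + L) < 1 := by
      have : 0 < 2 * γ * μ * L / (μ + L) := by positivity
      linarith
    calc ρ < Real.sqrt 1 := Real.sqrt_lt_sqrt harg hlt
      _ = 1 := Real.sqrt_one
  have h1ρ : (0:ℝ) < 1 - ρ := by linarith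
  have hεdiv : 0 ≤ γ * ε / (1 - ρ) := by positivity
  -- recursion bound
  have hrec : ∀ k, ‖x (k + 1) - xstar‖ ≤ ρ * ‖x k - xstar‖ + γ * ε := by
    -- established below via contraction; we first prove the contraction property
    have hcontr : ∀ y : EuclideanSpace ℝ (Fin n), ‖y - γ • f' y - xstar‖ ≤ ρ * ‖y - xstar‖ := by
      intro y
      rcases subsingleton_or_nontrivial (EuclideanSpace ℝ (Fin n)) with hsub | hnt
      · have h1 : y - γ • f' y - xstar = 0 := Subsingleton.elim _ _
        have h2 : y - xstar = (0 : EuclideanSpace ℝ (Fin n)) := Subsingleton.elim _ _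
        rw [h1, h2]
        simp
      -- nontrivial case
      · have hlow := aux_lower f f' μ hgrad hsc
        have hup := aux_upper f f' L hL.le hgrad hlip
        have hμleL : μ ≤ L := by
          obtain ⟨v, hv⟩ := exists_ne (0 : EuclideanSpace ℝ (Fin n))
          have h1 := hlow 0 v
          have h2 := hlow v 0
          rw [sub_zero] at h1
          rw [zero_sub, norm_neg, inner_neg_right] at h2
          have hmono : μ * ‖v‖ ^ 2 ≤ ⟪f' v - f' 0, v⟫_ℝ := by
            rw [inner_sub_left]; linarith
          have hCS : ⟪f' v - f' 0, v⟫_ℝ ≤ ‖f' v - f' 0‖ * ‖v‖ := real_inner_le_norm _ _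
          have hlipb : ‖f' v - f' 0‖ ≤ L * ‖v‖ := by
            have hd := hlip.dist_le_mul v 0
            rw [dist_eq_norm, dist_eq_norm, sub_zero] at hd
            simpa [Real.coe_toNNReal L hL.le] using hd
          have hv2 : 0 < ‖v‖ ^ 2 := pow_pos (norm_pos_iff.mpr hv) 2
          nlinarith [mul_le_mul_of_nonneg_right hlipb (norm_nonneg v)]
        have hstar : f' xstar = 0 := by
          have hmin' : IsLocalMin f xstar := Filter.Eventually.of_forall hmin
          have h0 := hmin'.hasFDerivAt_eq_zero (hgrad xstar).hasFDerivAt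
          exact (InnerProductSpace.toDual ℝ (EuclideanSpace ℝ (Fin n))).injective
            (h0.trans (map_zero (InnerProductSpace.toDual ℝ (EuclideanSpace ℝ (Fin n)))).symm)
        -- the auxiliary convex function g
        set g : EuclideanSpace ℝ (Fin n) → ℝ := fun z => f z - μ / 2 * ‖z‖ ^ 2 with hg
        set g' : EuclideanSpace ℝ (Fin n) → EuclideanSpace ℝ (Fin n) :=
          fun z => f' z - μ • z with hg'
        have hinner_id : ∀ p q : EuclideanSpace ℝ (Fin n), ⟪g' p, q - p⟫_ℝ =
            ⟪f' p, q - p⟫_ℝ - μ * (⟪p, q⟫_ℝ - ‖p‖ ^ 2) := by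
          intro p q
          simp only [hg', inner_sub_left, real_inner_smul_left, inner_sub_right,
            real_inner_self_eq_norm_sq]
          ring
        have hnorm_id : ∀ p q : EuclideanSpace ℝ (Fin n),
            ‖q - p‖ ^ 2 = ‖q‖ ^ 2 - 2 * ⟪p, q⟫_ℝ + ‖p‖ ^ 2 := by
          intro p q
          rw [norm_sub_sq_real, real_inner_comm]
        have hglow : ∀ p q : EuclideanSpace ℝ (Fin n), g p + ⟪g' p, q - p⟫_ℝ ≤ g q := by
          intro p q
          have h := hlow p q
          rw [hg]
          simp only
          rw [hinner_id p q]
          nlinarith [h, hnorm_id p q]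
        have hgup : ∀ p q : EuclideanSpace ℝ (Fin n),
            g q ≤ g p + ⟪g' p, q - p⟫_ℝ + (L - μ) / 2 * ‖q - p‖ ^ 2 := by
          intro p q
          have h := hup p q
          rw [hg]
          simp only
          rw [hinner_id p q]
          nlinarith [h, hnorm_id p q]
        have hcoco := aux_coco g g' (L - μ) (by linarith) hglow hgup y xstar
        -- expand everything
        set w := y - xstar with hw
        have hdg : g' y - g' xstar = f' y - μ • w := by
          rw [hg']
          simp only [hstar, hw]
          module
        rw [hdg] at hcoco
        set a := ‖w‖ ^ 2 with ha
        set b := ⟪w, f' y - μ • w⟫_ℝ with hb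
        set c := ‖f' y - μ • w‖ ^ 2 with hc
        have hkeycb : c ≤ (L - μ) * b := by
          rw [hc, hb, real_inner_comm]
          exact hcoco
        have hfy : μ • w + (f' y - μ • w) = f' y := by abel
        have hS2 : ⟪w, f' y⟫_ℝ = μ * a + b := by
          conv_lhs => rw [← hfy]
          rw [inner_add_right, real_inner_smul_right, real_inner_self_eq_norm_sq, ← ha, ← hb]
        have hN2 : ‖f' y‖ ^ 2 = μ ^ 2 * a + 2 * (μ * b) + c := by
          have h := norm_add_sq_real (μ • w) (f' y - μ • w)
          rw [hfy] at h
          rw [h, real_inner_smul_left, norm_smul, Real.norm_eq_abs, mul_pow, sq_abs,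
            ← ha, ← hb, ← hc]
        have hwid : y - γ • f' y - xstar = w - γ • f' y := by rw [hw]; abel
        have hsqle : ‖w - γ • f' y‖ ^ 2 ≤ (ρ * ‖w‖) ^ 2 := by
          have hexp : ‖w - γ • f' y‖ ^ 2 =
              a - 2 * (γ * ⟪w, f' y⟫_ℝ) + γ ^ 2 * ‖f' y‖ ^ 2 := by
            rw [norm_sub_sq_real, real_inner_smul_right, norm_smul, Real.norm_eq_abs,
              mul_pow, sq_abs, ← ha]
          rw [hexp, hS2, hN2, mul_pow, hρsq]
          have ha0 : 0 ≤ a := by positivity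
          have hc0 : 0 ≤ c := by positivity
          have hN0 : 0 ≤ μ ^ 2 * a + 2 * (μ * b) + c := by
            rw [← hN2]; positivity
          have hSN : μ * L * a + (μ ^ 2 * a + 2 * (μ * b) + c) ≤ (μ + L) * (μ * a + b) := by
            nlinarith [hkeycb]

          have hP : (a - 2 * (γ * (μ * a + b)) + γ ^ 2 * (μ ^ 2 * a + 2 * (μ * b) + c)) *
              (μ + L) ≤ ((μ + L) - 2 * γ * μ * L) * a := by
            nlinarith [mul_le_mul_of_nonneg_left hSN (by positivity : (0:ℝ) ≤ 2 * γ),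
              mul_nonneg (mul_nonneg hγ0.le hN0) (by linarith : (0:ℝ) ≤ 2 - γ * (μ + L))]
          have heq : (1 - 2 * γ * μ * L / (μ + L)) * ‖w‖ ^ 2 =
              ((μ + L) - 2 * γ * μ * L) * a / (μ + L) := by
            rw [← ha]; field_simp
          rw [heq, le_div_iff₀ hμL]
          exact hP
        rw [hwid]
        have := Real.sqrt_le_sqrt hsqle
        rwa [Real.sqrt_sq (norm_nonneg _), Real.sqrt_sq (by positivity)] at this
    intro k
    have h1 : x (k + 1) - xstar = (x k - γ • f' (x k) - xstar) + (-γ) • e k := by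
      rw [hiter k]; module
    calc ‖x (k + 1) - xstar‖ ≤ ‖x k - γ • f' (x k) - xstar‖ + ‖(-γ) • e k‖ := by
          rw [h1]; exact norm_add_le _ _
      _ ≤ ρ * ‖x k - xstar‖ + γ * ε := by
          have h2 := hcontr (x k)
          have h3 : ‖(-γ) • e k‖ ≤ γ * ε := by
            rw [norm_smul, Real.norm_eq_abs, abs_neg, abs_of_pos hγ0]
            exact mul_le_mul_of_nonneg_left (he k) hγ0.le
          linarith
  -- the explicit geometric bound
  have part2 : ∀ k, ‖x k - xstar‖ ≤
      ρ ^ k * ‖x 0 - xstar‖ + γ * ε * (1 - ρ ^ k) / (1 - ρ) := by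
    intro k
    induction k with
    | zero => simp
    | succ k ih =>
      have h2 := hrec k
      have h3 : ρ * (ρ ^ k * ‖x 0 - xstar‖ + γ * ε * (1 - ρ ^ k) / (1 - ρ)) + γ * ε =
          ρ ^ (k + 1) * ‖x 0 - xstar‖ + γ * ε * (1 - ρ ^ (k + 1)) / (1 - ρ) := by
        field_simp
        ring
      have h4 := mul_le_mul_of_nonneg_left ih hρ0
      linarith
  refine ⟨hρlt, part2, ?_⟩
  -- limsup bound
  have hpow : Tendsto (fun k : ℕ => ρ ^ k) atTop (nhds 0) :=
    tendsto_pow_atTop_nhds_zero_of_lt_one hρ0 hρlt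
  have htend : Tendsto (fun k : ℕ => ρ ^ k * ‖x 0 - xstar‖ + γ * ε * (1 - ρ ^ k) / (1 - ρ))
      atTop (nhds (γ * ε / (1 - ρ))) := by
    have h1 := hpow.mul_const ‖x 0 - xstar‖
    have h2 : Tendsto (fun k : ℕ => γ * ε * (1 - ρ ^ k) / (1 - ρ)) atTop
        (nhds (γ * ε * (1 - 0) / (1 - ρ))) :=
      ((tendsto_const_nhds.sub hpow).const_mul (γ * ε)).div_const (1 - ρ)
    have h3 := h1.add h2
    have h4 : 0 * ‖x 0 - xstar‖ + γ * ε * (1 - 0) / (1 - ρ) = γ * ε / (1 - ρ) := by ring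
    rwa [h4] at h3
  calc limsup (fun k => ‖x k - xstar‖) atTop
      ≤ limsup (fun k : ℕ => ρ ^ k * ‖x 0 - xstar‖ + γ * ε * (1 - ρ ^ k) / (1 - ρ)) atTop :=
        limsup_le_limsup (Eventually.of_forall part2)
          (isCoboundedUnder_le_of_le atTop (fun k => norm_nonneg _))
          htend.isBoundedUnder_le
    _ = γ * ε / (1 - ρ) := htend.limsup_eq
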